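/- Let X be a Banach space and f : X → ℝ∪{+∞} with ∂f maximal monotone. If f is lower semicontinuous at a point x ∈ dom(cl conv f), then there is a sequence (x_n) ⊆ D(∂f) with x_n → x and f(x_n) → f(x) = (cl conv f)(x). -/

import Mathlib

open scoped Topology

section Defs

variable {X : Type*} [AddCommGroup X] [Module ℝ X] [TopologicalSpace X]

/-- `p ∈ ∂f(x)`: `f x` is finite and `f y ≥ f x + ⟨y - x, p⟩` for all `y`. -/
def IsSubgrad (f : X → EReal) (x : X) (p : X →L[ℝ] ℝ) : Prop :=
  f x ≠ ⊤ ∧ f x ≠ ⊥ ∧ ∀ y, f x + (p (y - x) : EReal) ≤ f y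

/-- Graph of the convex subdifferential of `f`. -/
def graphSub (f : X → EReal) : Set (X × (X →L[ℝ] ℝ)) :=
  {q | IsSubgrad f q.1 q.2}

/-- Domain `D(∂f)` of the subdifferential. -/
def subdiffDom (f : X → EReal) : Set X := {x | ∃ p, IsSubgrad f x p}

/-- Range `R(∂f)` of the subdifferential. -/
def subdiffRan (f : X → EReal) : Set (X →L[ℝ] ℝ) := {p | ∃ x, IsSubgrad f x p}

/-- Monotone subset of `X × X*`. -/
def MonotoneSet (S : Set (X × (X →L[ℝ] ℝ))) : Prop :=
  ∀ a ∈ S, ∀ b ∈ S, 0 ≤ a.2 (a.1 - b.1) - b.2 (a.1 - b.1)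

/-- Maximal monotone subset of `X × X*` (maximal w.r.t. graph inclusion). -/
def MaxMonotoneSet (S : Set (X × (X →L[ℝ] ℝ))) : Prop :=
  MonotoneSet S ∧ ∀ T, MonotoneSet T → S ⊆ T → T = S

/-- Proper function: never `−∞` and not identically `+∞`. -/
def ProperE {Y : Type*} (f : Y → EReal) : Prop :=
  (∃ x, f x ≠ ⊤) ∧ ∀ x, f x ≠ ⊥

/-- Convexity of an extended-real-valued function via its epigraph. -/
def ConvexEpi (f : X → EReal) : Prop :=
  Convex ℝ {q : X × ℝ | f q.1 ≤ (q.2 : EReal)}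

/-- The lsc convex hull: the greatest lsc convex function majorized by `f`. -/
noncomputable def lscConvHull (f : X → EReal) : X → EReal := fun x =>
  sSup {v | ∃ g : X → EReal, ConvexEpi g ∧ LowerSemicontinuous g ∧ g ≤ f ∧ v = g x}

/-- Convex conjugate w.r.t. the dual system `(X, X*)`. -/
noncomputable def conjE (f : X → EReal) (p : X →L[ℝ] ℝ) : EReal :=
  ⨆ x, ((p x : EReal) - f x)

/-- Biconjugate `f**`. -/
noncomputable def biconjE (f : X → EReal) (x : X) : EReal :=
  ⨆ p : X →L[ℝ] ℝ, ((p x : EReal) - conjE f p)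

/-- Fitzpatrick function of `∂f`. -/
noncomputable def fitzSub (f : X → EReal) (x : X) (p : X →L[ℝ] ℝ) : EReal :=
  ⨆ a, ⨆ s, ⨆ _ : IsSubgrad f a s, ((s (x - a) + p a : ℝ) : EReal)

/-- Upper envelope `f^∪(x) = sup{⟨x−a, a*⟩ + f(a) : (a,a*) ∈ Graph ∂f}`. -/
noncomputable def upperEnv (f : X → EReal) (x : X) : EReal :=
  ⨆ a, ⨆ s, ⨆ _ : IsSubgrad f a s, ((s (x - a) : EReal) + f a)

end Defs


section Helpers

namespace EkAux

lemma ereal_le_add_nonneg {a : EReal} {c : ℝ} (hc : 0 ≤ c) : a ≤ a + (c : EReal) := by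
  nth_rewrite 1 [← add_zero a]
  exact add_le_add_right (by exact_mod_cast hc : (0:EReal) ≤ (c:EReal)) a

variable {X : Type*} [NormedAddCommGroup X]

/-- Ekeland set. -/
def S (ψ : X → EReal) (w : X) : Set X := {y | ψ y + ((‖y - w‖ : ℝ) : EReal) ≤ ψ w}

lemma mem_S_self (ψ : X → EReal) (w : X) : w ∈ S ψ w := by
  simp [S]

lemma S_subset {ψ : X → EReal} {w w' : X} (h : w' ∈ S ψ w) : S ψ w' ⊆ S ψ w := by
  intro y hy
  simp only [S, Set.mem_setOf_eq] at *
  have htri : ‖y - w‖ ≤ ‖y - w'‖ + ‖w' - w‖ := by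
    have := dist_triangle y w' w
    simpa [dist_eq_norm] using this
  calc ψ y + ((‖y - w‖ : ℝ) : EReal)
      ≤ ψ y + ((‖y - w'‖ + ‖w' - w‖ : ℝ) : EReal) :=
        add_le_add_right (by exact_mod_cast htri : ((‖y - w‖ : ℝ) : EReal) ≤ ((‖y - w'‖ + ‖w' - w‖ : ℝ) : EReal)) _
    _ = (ψ y + (‖y - w'‖ : ℝ)) + ((‖w' - w‖ : ℝ) : EReal) := by
        rw [EReal.coe_add, add_assoc]
    _ ≤ ψ w' + ((‖w' - w‖ : ℝ) : EReal) := add_le_add_left hy _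
    _ ≤ ψ w := h

lemma psi_le_of_mem {ψ : X → EReal} {w y : X} (h : y ∈ S ψ w) : ψ y ≤ ψ w :=
  le_trans (ereal_le_add_nonneg (norm_nonneg _)) h

lemma exists_next (ψ : X → EReal) (m : ℝ) (hm : ∀ y, (m : EReal) ≤ ψ y) (w : X)
    (δ : ℝ) (hδ : 0 < δ) :
    ∃ y, y ∈ S ψ w ∧ ∀ y' ∈ S ψ w, ψ y ≤ ψ y' + (δ : EReal) := by
  set v : EReal := ⨅ y ∈ S ψ w, ψ y with hv_def
  by_cases hv : v = ⊤
  · refine ⟨w, mem_S_self ψ w, fun y' hy' => ?_⟩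
    have h1 : v ≤ ψ y' := iInf₂_le y' hy'
    rw [hv, top_le_iff] at h1
    rw [h1, EReal.top_add_coe]
    exact le_top
  · have hvb : (m : EReal) ≤ v := le_iInf₂ fun y _ => hm y
    have hv2 : v ≠ ⊥ := fun h => by simp [h] at hvb
    have hlt : v < v + (δ : EReal) := by
      obtain ⟨r, hr⟩ : ∃ r : ℝ, v = (r : EReal) := ⟨v.toReal, (EReal.coe_toReal hv hv2).symm⟩
      rw [hr, ← EReal.coe_add]
      exact_mod_cast lt_add_of_pos_right r hδ
    have hlt2 : (⨅ y ∈ S ψ w, ψ y) < v + (δ : EReal) := by rw [← hv_def]; exact hlt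
    have : ∃ y, ∃ _ : y ∈ S ψ w, ψ y < v + (δ : EReal) := by
      simpa only [iInf_lt_iff] using hlt2
    obtain ⟨y, hy, hylt⟩ := this
    exact ⟨y, hy, fun y' hy' =>
      le_trans hylt.le (add_le_add_left (iInf₂_le y' hy') _)⟩

theorem ekeland [CompleteSpace X] (ψ : X → EReal) (hlsc : LowerSemicontinuous ψ) (m : ℝ)
    (hm : ∀ y, (m : EReal) ≤ ψ y) (x : X) (hx : ψ x ≠ ⊤) :
    ∃ z, ψ z ≤ ψ x ∧ ∀ y, ψ z ≤ ψ y + ((‖y - z‖ : ℝ) : EReal) := by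
  have hfinb : ∀ y, ψ y ≠ ⊥ := fun y h => by simpa [h] using hm y
  have hnext := fun (w : X) (k : ℕ) => exists_next ψ m hm w ((1/2 : ℝ)^k) (by positivity)
  choose F hF1 hF2 using hnext
  let z : ℕ → X := fun k => Nat.rec x (fun k w => F w k) k
  have hz0 : z 0 = x := rfl
  have hA : ∀ k, z (k+1) ∈ S ψ (z k) := fun k => hF1 (z k) k
  have hB : ∀ k, ∀ y ∈ S ψ (z k), ψ (z (k+1)) ≤ ψ y + (((1/2 : ℝ)^k : ℝ) : EReal) :=
    fun k => hF2 (z k) k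
  have hchain : ∀ k j, z (k + j) ∈ S ψ (z k) := by
    intro k j
    induction j with
    | zero => exact mem_S_self ψ (z k)
    | succ j ih => exact S_subset ih (hA (k + j))
  have hψx : ∀ k, ψ (z k) ≤ ψ x := by
    intro k
    have := hchain 0 k
    rw [Nat.zero_add] at this
    exact psi_le_of_mem this
  have hfin : ∀ k, ψ (z k) ≠ ⊤ := fun k h => hx (top_le_iff.mp (h ▸ hψx k))
  have hdist : ∀ k, ∀ y ∈ S ψ (z (k+1)), ‖y - z (k+1)‖ ≤ (1/2 : ℝ)^k := by
    intro k y hy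
    have hy' : y ∈ S ψ (z k) := S_subset (hA k) hy
    have h1 : ψ y + ((‖y - z (k+1)‖ : ℝ) : EReal) ≤ ψ (z (k+1)) := hy
    have h2 : ψ (z (k+1)) ≤ ψ y + (((1/2 : ℝ)^k : ℝ) : EReal) := hB k y hy'
    have hyT : ψ y ≠ ⊤ := by
      intro h
      rw [h, EReal.top_add_coe] at h1
      exact hfin (k+1) (top_le_iff.mp h1)
    obtain ⟨r, hr⟩ : ∃ r : ℝ, ψ y = (r : EReal) := ⟨_, (EReal.coe_toReal hyT (hfinb y)).symm⟩
    rw [hr] at h1 h2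
    have h3 := le_trans h1 h2
    rw [← EReal.coe_add, ← EReal.coe_add, EReal.coe_le_coe_iff] at h3
    linarith
  set C : ℝ := max ((ψ x).toReal - m) 2 with hC_def
  have hd0 : ∀ k, dist (z k) (z (k+1)) ≤ C * (1/2 : ℝ)^k := by
    intro k
    rw [dist_eq_norm, norm_sub_rev]
    cases k with
    | zero =>
      have h1 : ψ (z 1) + ((‖z 1 - z 0‖ : ℝ) : EReal) ≤ ψ (z 0) := hA 0
      obtain ⟨r, hr⟩ : ∃ r : ℝ, ψ (z 1) = (r : EReal) :=
        ⟨_, (EReal.coe_toReal (hfin 1) (hfinb _)).symm⟩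
      have hψx0 : ψ (z 0) = ((ψ x).toReal : EReal) := by
        rw [hz0, EReal.coe_toReal hx (hfinb x)]
      rw [hr, hψx0, ← EReal.coe_add, EReal.coe_le_coe_iff] at h1
      have hmr : m ≤ r := by
        have := hm (z 1); rw [hr] at this; exact_mod_cast this
      have : ‖z 1 - z 0‖ ≤ (ψ x).toReal - m := by linarith
      calc ‖z 1 - z 0‖ ≤ (ψ x).toReal - m := this
        _ ≤ C := le_max_left _ _
        _ = C * (1/2 : ℝ)^0 := by norm_num
    | succ j =>
      have h1 := hdist j (z (j+2)) (hA (j+1))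
      have h2 : (1/2 : ℝ)^j = 2 * (1/2 : ℝ)^(j+1) := by ring
      calc ‖z (j+2) - z (j+1)‖ ≤ (1/2 : ℝ)^j := h1
        _ = 2 * (1/2 : ℝ)^(j+1) := h2
        _ ≤ C * (1/2 : ℝ)^(j+1) := by
            have : (2:ℝ) ≤ C := le_max_right _ _
            have hp : (0:ℝ) < (1/2 : ℝ)^(j+1) := by positivity
            nlinarith
  have hcauchy : CauchySeq z := cauchySeq_of_le_geometric (1/2 : ℝ) C (by norm_num) hd0
  obtain ⟨z', hz'⟩ := cauchySeq_tendsto_of_complete hcauchy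
  have hSclosed : ∀ w, IsClosed (S ψ w) := by
    intro w
    have hcont : Continuous fun y : X => ((‖y - w‖ : ℝ) : EReal) :=
      continuous_coe_real_ereal.comp ((continuous_id.sub continuous_const).norm)
    have hl : LowerSemicontinuous fun y => ψ y + ((‖y - w‖ : ℝ) : EReal) := by
      apply hlsc.add' hcont.lowerSemicontinuous
      intro y
      exact EReal.continuousAt_add (Or.inr (EReal.coe_ne_bot _)) (Or.inr (EReal.coe_ne_top _))
    exact hl.isClosed_preimage (ψ w)
  have hmem : ∀ k, z' ∈ S ψ (z k) := by
    intro k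
    apply (hSclosed (z k)).mem_of_tendsto hz'
    filter_upwards [Filter.eventually_ge_atTop k] with j hj
    obtain ⟨i, rfl⟩ := Nat.exists_eq_add_of_le hj
    exact hchain k i
  refine ⟨z', ?_, ?_⟩
  · have := hmem 0
    rw [hz0] at this
    exact psi_le_of_mem this
  · intro y
    by_cases hy : y ∈ S ψ z'
    · have hyz : y = z' := by
        have key : ∀ k, ‖y - z'‖ ≤ 2 * (1/2 : ℝ)^k := by
          intro k
          have h1 : y ∈ S ψ (z (k+1)) := S_subset (hmem (k+1)) hy
          have h2 := hdist k y h1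
          have h3 := hdist k z' (hmem (k+1))
          have htri : ‖y - z'‖ ≤ ‖y - z (k+1)‖ + ‖z' - z (k+1)‖ := by
            have := dist_triangle y (z (k+1)) z'
            simp only [dist_eq_norm] at this
            calc ‖y - z'‖ ≤ ‖y - z (k+1)‖ + ‖z (k+1) - z'‖ := this
              _ = ‖y - z (k+1)‖ + ‖z' - z (k+1)‖ := by rw [norm_sub_rev (z (k+1))]
          linarith
        have htend : Filter.Tendsto (fun k : ℕ => 2 * (1/2 : ℝ)^k) Filter.atTop (𝓝 0) := by
          have := (tendsto_pow_atTop_nhds_zero_of_lt_one (by norm_num : (0:ℝ) ≤ 1/2)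
            (by norm_num : (1/2 : ℝ) < 1)).const_mul 2
          simpa using this
        have hle : ‖y - z'‖ ≤ 0 := ge_of_tendsto htend (Filter.Eventually.of_forall key)
        have : y - z' = 0 := by
          have := le_antisymm hle (norm_nonneg _)
          exact norm_eq_zero.mp this
        exact sub_eq_zero.mp this
      rw [hyz]
      simp
    · exact (not_le.mp hy).le

end EkAux

section HullAux

variable {X : Type*} [AddCommGroup X] [Module ℝ X] [TopologicalSpace X]

lemma lscConvHull_le (f : X → EReal) (y : X) : lscConvHull f y ≤ f y := by
  apply sSup_le
  rintro v ⟨g, -, -, hgf, rfl⟩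
  exact hgf y

lemma le_lscConvHull {f g : X → EReal} (h1 : ConvexEpi g) (h2 : LowerSemicontinuous g)
    (h3 : g ≤ f) (y : X) : g y ≤ lscConvHull f y :=
  le_sSup ⟨g, h1, h2, h3, rfl⟩

lemma lscConvHull_lsc (f : X → EReal) : LowerSemicontinuous (lscConvHull f) := by
  have heq : lscConvHull f = fun y =>
      ⨆ g : {g : X → EReal // ConvexEpi g ∧ LowerSemicontinuous g ∧ g ≤ f}, g.1 y := by
    funext y
    have hset : {v | ∃ g : X → EReal, ConvexEpi g ∧ LowerSemicontinuous g ∧ g ≤ f ∧ v = g y} =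
        Set.range (fun g : {g : X → EReal // ConvexEpi g ∧ LowerSemicontinuous g ∧ g ≤ f} =>
          g.1 y) := by
      ext v
      constructor
      · rintro ⟨g, h1, h2, h3, rfl⟩; exact ⟨⟨g, h1, h2, h3⟩, rfl⟩
      · rintro ⟨⟨g, h1, h2, h3⟩, rfl⟩; exact ⟨g, h1, h2, h3, rfl⟩
    show sSup _ = _
    rw [hset, sSup_range]
  rw [heq]
  exact lowerSemicontinuous_iSup fun g => g.2.2.1

lemma lscConvHull_convexEpi (f : X → EReal) : ConvexEpi (lscConvHull f) := by
  intro q hq q' hq' a b ha hb hab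
  simp only [Set.mem_setOf_eq] at hq hq' ⊢
  apply sSup_le
  rintro v ⟨g, h1, h2, h3, rfl⟩
  have hm1 : g q.1 ∈ {v | ∃ g' : X → EReal,
      ConvexEpi g' ∧ LowerSemicontinuous g' ∧ g' ≤ f ∧ v = g' q.1} := ⟨g, h1, h2, h3, rfl⟩
  have hm2 : g q'.1 ∈ {v | ∃ g' : X → EReal,
      ConvexEpi g' ∧ LowerSemicontinuous g' ∧ g' ≤ f ∧ v = g' q'.1} := ⟨g, h1, h2, h3, rfl⟩
  have hq1 : g q.1 ≤ (q.2 : EReal) := le_trans (le_sSup hm1) hq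
  have hq2 : g q'.1 ≤ (q'.2 : EReal) := le_trans (le_sSup hm2) hq'
  exact h1 hq1 hq2 ha hb hab

lemma graphSub_monotone (f : X → EReal) : MonotoneSet (graphSub f) := by
  rintro ⟨a, s⟩ ⟨haT, haB, hsa⟩ ⟨b, t⟩ ⟨hbT, hbB, htb⟩
  obtain ⟨ra, hra⟩ : ∃ r : ℝ, f a = (r : EReal) := ⟨_, (EReal.coe_toReal haT haB).symm⟩
  obtain ⟨rb, hrb⟩ : ∃ r : ℝ, f b = (r : EReal) := ⟨_, (EReal.coe_toReal hbT hbB).symm⟩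
  have h1 := hsa b
  have h2 := htb a
  rw [hra, hrb, ← EReal.coe_add, EReal.coe_le_coe_iff] at h1
  rw [hra, hrb, ← EReal.coe_add, EReal.coe_le_coe_iff] at h2
  have hs : s (b - a) = - s (a - b) := by rw [← map_neg, neg_sub]
  simp only
  linarith [hs ▸ h1]

end HullAux

section AffAux

variable {X : Type*} [NormedAddCommGroup X] [NormedSpace ℝ X]

lemma affine_convexEpi (r : ℝ) (p : X →L[ℝ] ℝ) (x0 : X) :
    ConvexEpi (fun y : X => ((r + p (y - x0) : ℝ) : EReal)) := by
  intro q hq q' hq' a b ha hb hab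
  simp only [Set.mem_setOf_eq, EReal.coe_le_coe_iff] at hq hq' ⊢
  have h1 : (a • q + b • q').1 = a • q.1 + b • q'.1 := rfl
  have h2 : (a • q + b • q').2 = a * q.2 + b * q'.2 := rfl
  rw [h1, h2]
  have hp : p (a • q.1 + b • q'.1 - x0) = a * p q.1 + b * p q'.1 - p x0 := by
    rw [map_sub, map_add, map_smul, map_smul]
    simp [smul_eq_mul]
  have hpq : p (q.1 - x0) = p q.1 - p x0 := by rw [map_sub]
  have hpq' : p (q'.1 - x0) = p q'.1 - p x0 := by rw [map_sub]
  rw [hpq] at hq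
  rw [hpq'] at hq'
  rw [hp]
  have H1 : a * (r + (p q.1 - p x0)) ≤ a * q.2 := mul_le_mul_of_nonneg_left hq ha
  have H2 : b * (r + (p q'.1 - p x0)) ≤ b * q'.2 := mul_le_mul_of_nonneg_left hq' hb
  have hsum : r + (a * p q.1 + b * p q'.1 - p x0) =
      a * (r + (p q.1 - p x0)) + b * (r + (p q'.1 - p x0)) := by
    linear_combination (p x0 - r) * hab
  rw [hsum]
  exact add_le_add H1 H2

lemma affine_lsc (r : ℝ) (p : X →L[ℝ] ℝ) (x0 : X) :
    LowerSemicontinuous (fun y : X => ((r + p (y - x0) : ℝ) : EReal)) := by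
  apply Continuous.lowerSemicontinuous
  exact continuous_coe_real_ereal.comp
    (continuous_const.add (p.continuous.comp (continuous_id.sub continuous_const)))

lemma affine_le_of_subgrad {f : X → EReal} {x0 : X} {p : X →L[ℝ] ℝ}
    (h : IsSubgrad f x0 p) (y : X) :
    (((f x0).toReal + p (y - x0) : ℝ) : EReal) ≤ f y := by
  have := h.2.2 y
  rwa [← EReal.coe_toReal h.1 h.2.1, ← EReal.coe_add] at this

lemma affine_le_hull {f : X → EReal} {x0 : X} {p : X →L[ℝ] ℝ}
    (h : IsSubgrad f x0 p) (y : X) :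
    (((f x0).toReal + p (y - x0) : ℝ) : EReal) ≤ lscConvHull f y :=
  le_lscConvHull (affine_convexEpi _ p x0) (affine_lsc _ p x0)
    (fun y' => affine_le_of_subgrad h y') y

lemma subgrad_hull_eq {f : X → EReal} {w : X} {p : X →L[ℝ] ℝ} (h : IsSubgrad f w p) :
    lscConvHull f w = f w ∧ IsSubgrad (lscConvHull f) w p := by
  have h1 : f w ≤ lscConvHull f w := by
    have := affine_le_hull h w
    simpa [EReal.coe_toReal h.1 h.2.1] using this
  have heq : lscConvHull f w = f w := le_antisymm (lscConvHull_le f w) h1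
  refine ⟨heq, ?_, ?_, fun y => ?_⟩
  · rw [heq]; exact h.1
  · rw [heq]; exact h.2.1
  · rw [heq]
    have := affine_le_hull h y
    rwa [EReal.coe_add, EReal.coe_toReal h.1 h.2.1] at this

lemma graphSub_subset_hull (f : X → EReal) :
    graphSub f ⊆ graphSub (lscConvHull f) := by
  rintro ⟨w, p⟩ h
  exact (subgrad_hull_eq h).2

lemma convexOn_norm_sub (w : X) : ConvexOn ℝ Set.univ fun y : X => ‖y - w‖ := by
  refine ⟨convex_univ, fun q _ q' _ a b ha hb hab => ?_⟩
  have hw : a • w + b • w = w := by rw [← add_smul, hab, one_smul]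
  have hkey : a • q + b • q' - w = a • (q - w) + b • (q' - w) := by
    rw [smul_sub, smul_sub,
      show a • q - a • w + (b • q' - b • w) = a • q + b • q' - (a • w + b • w) from by abel, hw]
  show ‖a • q + b • q' - w‖ ≤ a * ‖q - w‖ + b * ‖q' - w‖
  rw [hkey]
  calc ‖a • (q - w) + b • (q' - w)‖ ≤ ‖a • (q - w)‖ + ‖b • (q' - w)‖ := norm_add_le _ _
    _ = a * ‖q - w‖ + b * ‖q' - w‖ := by
        rw [norm_smul, norm_smul, Real.norm_of_nonneg ha, Real.norm_of_nonneg hb]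

/-- Extraction of a subgradient at a minimizer of `g + h`, via Hahn-Banach separation. -/
lemma subgrad_of_min (g : X → EReal) (hgc : ConvexEpi g) (hgbot : ∀ y, g y ≠ ⊥)
    (h : X → ℝ) (hh_cvx : ConvexOn ℝ Set.univ h) (hh_cont : Continuous h)
    (z : X) (hz_fin : g z ≠ ⊤)
    (hmin : ∀ y, g z + ((h z : ℝ) : EReal) ≤ g y + ((h y : ℝ) : EReal)) :
    ∃ p, IsSubgrad g z p := by
  set rz := (g z).toReal with hrz
  have hgz : g z = (rz : EReal) := (EReal.coe_toReal hz_fin (hgbot z)).symm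
  have hCs_open : IsOpen {q : X × ℝ | q.2 + h q.1 < rz + h z} :=
    isOpen_lt (continuous_snd.add (hh_cont.comp continuous_fst)) continuous_const
  have hCs_conv : Convex ℝ {q : X × ℝ | q.2 + h q.1 < rz + h z} := by
    intro q hq q' hq' a b ha hb hab
    simp only [Set.mem_setOf_eq] at hq hq' ⊢
    have hhc := hh_cvx.2 (Set.mem_univ q.1) (Set.mem_univ q'.1) ha hb hab
    simp only [smul_eq_mul] at hhc
    have h1 : (a • q + b • q').1 = a • q.1 + b • q'.1 := rfl
    have h2 : (a • q + b • q').2 = a * q.2 + b * q'.2 := rfl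
    rw [h1, h2]
    rcases eq_or_lt_of_le ha with ha0 | ha0
    · have hb1 : b = 1 := by linarith
      rw [← ha0, hb1]
      simpa using hq'
    · have hbb := mul_le_mul_of_nonneg_left hq'.le hb
      have haa := mul_lt_mul_of_pos_left hq ha0
      have hrz1 : a * (rz + h z) + b * (rz + h z) = rz + h z := by
        linear_combination (rz + h z) * hab
      linarith
  have hdisj : Disjoint {q : X × ℝ | q.2 + h q.1 < rz + h z} {q : X × ℝ | g q.1 ≤ (q.2 : EReal)} := by
    rw [Set.disjoint_left]
    rintro q hqC hqE
    simp only [Set.mem_setOf_eq] at hqC hqE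
    have h1 : g q.1 + ((h q.1 : ℝ) : EReal) ≤ ((q.2 + h q.1 : ℝ) : EReal) := by
      rw [EReal.coe_add]; exact add_le_add_left hqE _
    have h2 := hmin q.1
    rw [hgz, ← EReal.coe_add] at h2
    have h3 := le_trans h2 h1
    rw [EReal.coe_le_coe_iff] at h3
    linarith
  obtain ⟨L, u, hLC, hLE⟩ := geometric_hahn_banach_open hCs_conv hCs_open hgc hdisj
  set l : X →L[ℝ] ℝ := L.comp (ContinuousLinearMap.inl ℝ X ℝ) with hl
  set c : ℝ := L (0, 1) with hc
  have hLdecomp : ∀ (y : X) (t : ℝ), L (y, t) = l y + t * c := by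
    intro y t
    have hyt : (y, t) = (y, (0 : ℝ)) + t • ((0 : X), (1 : ℝ)) := by
      simp [Prod.ext_iff]
    rw [hyt, map_add, map_smul]
    simp [hl, hc, smul_eq_mul]
  have hmemE : (z, rz) ∈ {q : X × ℝ | g q.1 ≤ (q.2 : EReal)} := by
    simp only [Set.mem_setOf_eq, hgz]; exact le_refl _
  have hCmem : ∀ δ : ℝ, 0 < δ → (z, rz - δ) ∈ {q : X × ℝ | q.2 + h q.1 < rz + h z} := by
    intro δ hδ
    simp only [Set.mem_setOf_eq]
    linarith
  have hc_pos : 0 < c := by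
    have h1 := hLC _ (hCmem 1 one_pos)
    have h2 := hLE _ hmemE
    rw [hLdecomp] at h1 h2
    linarith
  have hzu : l z + rz * c ≤ u := by
    by_contra hcon
    push_neg at hcon
    set δ := (l z + rz * c - u) / c with hδdef
    have hδ : 0 < δ := div_pos (by linarith) hc_pos
    have h1 := hLC _ (hCmem δ hδ)
    rw [hLdecomp] at h1
    have h2 : δ * c = l z + rz * c - u := by
      rw [hδdef]; field_simp
    nlinarith
  refine ⟨(-c⁻¹) • l, hz_fin, hgbot z, fun y => ?_⟩
  by_cases hyT : g y = ⊤
  · rw [hyT]; exact le_top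
  · set ry := (g y).toReal with hry
    have hgy : g y = (ry : EReal) := (EReal.coe_toReal hyT (hgbot y)).symm
    have hmemEy : (y, ry) ∈ {q : X × ℝ | g q.1 ≤ (q.2 : EReal)} := by
      simp only [Set.mem_setOf_eq, hgy]; exact le_refl _
    have h2 := hLE _ hmemEy
    rw [hLdecomp] at h2
    rw [hgz, hgy, ← EReal.coe_add, EReal.coe_le_coe_iff]
    have happ : ((-c⁻¹) • l) (y - z) = -c⁻¹ * (l y - l z) := by
      simp [map_sub]
      ring
    rw [happ]
    have hkey : l z + rz * c ≤ l y + ry * c := le_trans hzu h2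
    have h3 : (rz - ry) * c ≤ l y - l z := by linarith
    have h4 : rz - ry ≤ (l y - l z) / c := by
      rw [le_div_iff₀ hc_pos]; linarith
    have h5 : (l y - l z) / c = c⁻¹ * (l y - l z) := by ring
    linarith [h4, h5 ▸ h4]

end AffAux


end Helpers

theorem lsc_point_approx_by_subdiffDom {X : Type*} [NormedAddCommGroup X] [NormedSpace ℝ X] [CompleteSpace X]
    (f : X → EReal) (hbot : ∀ x, f x ≠ ⊥)
    (hmax : MaxMonotoneSet (graphSub f))
    (x : X) (hx : lscConvHull f x ≠ ⊤) (hlsc : LowerSemicontinuousAt f x) :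
    ∃ u : ℕ → X, (∀ n, u n ∈ subdiffDom f) ∧
      Filter.Tendsto u Filter.atTop (𝓝 x) ∧
      Filter.Tendsto (fun n => f (u n)) Filter.atTop (𝓝 (f x)) ∧
      f x = lscConvHull f x := by
  classical
  obtain ⟨⟨x0, p0⟩, hx0⟩ : (graphSub f).Nonempty := by
    by_contra hemp
    rw [Set.not_nonempty_iff_eq_empty] at hemp
    have hmono : MonotoneSet ({((0 : X), (0 : X →L[ℝ] ℝ))} : Set (X × (X →L[ℝ] ℝ))) := by
      rintro a ha b hb
      simp only [Set.mem_singleton_iff] at ha hb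
      subst ha; subst hb
      simp
    have hT := hmax.2 _ hmono (by rw [hemp]; exact Set.empty_subset _)
    have hmem : ((0 : X), (0 : X →L[ℝ] ℝ)) ∈ graphSub f := hT ▸ rfl
    rw [hemp] at hmem
    exact hmem
  have hgb : ∀ y, lscConvHull f y ≠ ⊥ := by
    intro y hbot'
    have := affine_le_hull hx0 y
    rw [hbot'] at this
    exact (EReal.coe_ne_bot _) (le_bot_iff.mp this)
  have hEq : graphSub (lscConvHull f) = graphSub f :=
    hmax.2 _ (graphSub_monotone _) (graphSub_subset_hull f)
  set m0 : ℝ := (f x0).toReal with hm0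
  have haff : ∀ y, ((m0 + p0 (y - x0) : ℝ) : EReal) ≤ lscConvHull f y := fun y =>
    affine_le_hull hx0 y
  set rgx : ℝ := (lscConvHull f x).toReal with hrgx
  have hgx : lscConvHull f x = (rgx : EReal) := (EReal.coe_toReal hx (hgb x)).symm
  set c : ℕ → X → ℝ := fun n y => ((n : ℝ) + 1) * ‖y - x‖ - p0 y with hc
  set ψ : ℕ → X → EReal := fun n y => lscConvHull f y + ((c n y : ℝ) : EReal) with hψ
  set m : ℝ := m0 - p0 x0 with hm
  have hmb : ∀ n y, (m : EReal) ≤ ψ n y := by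
    intro n y
    have h1 : ((m : ℝ) : EReal) ≤ ((m0 + p0 (y - x0) + c n y : ℝ) : EReal) := by
      rw [EReal.coe_le_coe_iff]
      simp only [hc, hm, map_sub]
      have : (0 : ℝ) ≤ ((n : ℝ) + 1) * ‖y - x‖ := by positivity
      linarith
    calc ((m : ℝ) : EReal) ≤ ((m0 + p0 (y - x0) + c n y : ℝ) : EReal) := h1
      _ = ((m0 + p0 (y - x0) : ℝ) : EReal) + ((c n y : ℝ) : EReal) := by rw [← EReal.coe_add]
      _ ≤ lscConvHull f y + ((c n y : ℝ) : EReal) := add_le_add_left (haff y) _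
  have hclsc : ∀ n, Continuous (c n) := by
    intro n
    exact (continuous_const.mul ((continuous_id.sub continuous_const).norm)).sub p0.continuous
  have hψlsc : ∀ n, LowerSemicontinuous (ψ n) := by
    intro n
    apply (lscConvHull_lsc f).add' (continuous_coe_real_ereal.comp (hclsc n)).lowerSemicontinuous
    intro y
    exact EReal.continuousAt_add (Or.inr (EReal.coe_ne_bot _)) (Or.inr (EReal.coe_ne_top _))
  have hψxT : ∀ n, ψ n x ≠ ⊤ := by
    intro n h
    simp only [hψ, hgx, ← EReal.coe_add] at h
    exact (EReal.coe_ne_top _) h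
  have hek := fun n => EkAux.ekeland (ψ n) (hψlsc n) m (hmb n) x (hψxT n)
  choose u hu1 hu2 using hek
  have hsub : ∀ n, ∃ p, IsSubgrad (lscConvHull f) (u n) p := by
    intro n
    have hfinTn : lscConvHull f (u n) ≠ ⊤ := by
      intro hT
      have h1 := hu1 n
      simp only [hψ, hT, EReal.top_add_coe] at h1
      exact hψxT n (top_le_iff.mp h1)
    refine subgrad_of_min (lscConvHull f) (lscConvHull_convexEpi f) hgb
      (fun y => c n y + ‖y - u n‖) ?_ ?_ (u n) hfinTn ?_
    · refine ⟨convex_univ, fun q _ q' _ a b ha hb hab => ?_⟩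
      have hn1 := (convexOn_norm_sub (w := x)).2 (Set.mem_univ q) (Set.mem_univ q') ha hb hab
      have hn2 := (convexOn_norm_sub (w := u n)).2 (Set.mem_univ q) (Set.mem_univ q') ha hb hab
      simp only [smul_eq_mul] at hn1 hn2 ⊢
      simp only [hc, map_add, map_smul, smul_eq_mul]
      have hN : (0 : ℝ) ≤ (n : ℝ) + 1 := by positivity
      nlinarith [mul_le_mul_of_nonneg_left hn1 hN]
    · exact (hclsc n).add ((continuous_id.sub continuous_const).norm)
    · intro y
      have h2 := hu2 n y
      simp only [hψ] at h2
      simp only [sub_self, norm_zero, add_zero, EReal.coe_add, ← add_assoc]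
      exact h2
  choose p hp using hsub
  have hpf : ∀ n, IsSubgrad f (u n) (p n) := by
    intro n
    have hmem : (u n, p n) ∈ graphSub (lscConvHull f) := hp n
    rw [hEq] at hmem
    exact hmem
  have hdom : ∀ n, u n ∈ subdiffDom f := fun n => ⟨p n, hpf n⟩
  have hfeq : ∀ n, f (u n) = lscConvHull f (u n) := fun n => ((subgrad_hull_eq (hpf n)).1).symm
  set r : ℕ → ℝ := fun n => (lscConvHull f (u n)).toReal with hr
  have hru : ∀ n, lscConvHull f (u n) = ((r n : ℝ) : EReal) := fun n =>
    (EReal.coe_toReal (hp n).1 (hgb _)).symm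
  have hIn : ∀ n, r n + (((n : ℝ) + 1) * ‖u n - x‖ - p0 (u n)) ≤ rgx - p0 x := by
    intro n
    have h1 := hu1 n
    simp only [hψ, hru n, hgx, hc, ← EReal.coe_add] at h1
    rw [EReal.coe_le_coe_iff] at h1
    simp only [sub_self, norm_zero, mul_zero] at h1
    linarith
  have haffr : ∀ n, m0 + (p0 (u n) - p0 x0) ≤ r n := by
    intro n
    have h1 := haff (u n)
    rw [hru n, EReal.coe_le_coe_iff, map_sub] at h1
    exact h1
  set A : ℝ := rgx - p0 x - m0 + p0 x0 with hA
  have hnorm : ∀ n, ‖u n - x‖ ≤ A / ((n : ℝ) + 1) := by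
    intro n
    rw [le_div_iff₀ (by positivity : (0 : ℝ) < (n : ℝ) + 1)]
    have h1 := hIn n
    have h2 := haffr n
    nlinarith
  have htendu : Filter.Tendsto u Filter.atTop (𝓝 x) := by
    have hA0 : Filter.Tendsto (fun n : ℕ => A / ((n : ℝ) + 1)) Filter.atTop (𝓝 0) := by
      have h1 := tendsto_one_div_add_atTop_nhds_zero_nat.const_mul A
      simp only [mul_zero] at h1
      refine h1.congr fun n => ?_
      rw [mul_one_div]
    have hnt : Filter.Tendsto (fun n => ‖u n - x‖) Filter.atTop (𝓝 0) :=
      squeeze_zero (fun n => norm_nonneg _) hnorm hA0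
    exact tendsto_iff_norm_sub_tendsto_zero.mpr hnt
  have hp0u : Filter.Tendsto (fun n => p0 (u n)) Filter.atTop (𝓝 (p0 x)) :=
    (p0.continuous.tendsto x).comp htendu
  have hrub : ∀ n, r n ≤ rgx - p0 x + p0 (u n) := by
    intro n
    have h1 := hIn n
    have h2 : (0 : ℝ) ≤ ((n : ℝ) + 1) * ‖u n - x‖ := by positivity
    linarith
  have hRHS : Filter.Tendsto (fun n => rgx - p0 x + p0 (u n)) Filter.atTop (𝓝 rgx) := by
    have h1 := (tendsto_const_nhds (x := rgx - p0 x) (f := Filter.atTop (α := ℕ))).add hp0u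
    have h2 : rgx - p0 x + p0 x = rgx := by ring
    rwa [h2] at h1
  have hclaim : ∀ t : ℝ, (t : EReal) < f x → t ≤ rgx := by
    intro t ht
    have hev1 : ∀ᶠ n in Filter.atTop, (t : EReal) < f (u n) := htendu.eventually (hlsc _ ht)
    by_contra hcon
    push_neg at hcon
    have hev2 : ∀ᶠ n in Filter.atTop, rgx - p0 x + p0 (u n) < t :=
      hRHS.eventually_lt_const hcon
    obtain ⟨n, hn1, hn2⟩ := (hev1.and hev2).exists
    rw [hfeq n, hru n, EReal.coe_lt_coe_iff] at hn1
    linarith [hrub n]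
  have hfxle : f x ≤ ((rgx : ℝ) : EReal) := by
    by_contra hcon
    push_neg at hcon
    obtain ⟨t, ht1, ht2⟩ := EReal.exists_between_coe_real hcon
    have h1 := hclaim t ht2
    rw [EReal.coe_lt_coe_iff] at ht1
    linarith
  have hfx : f x = lscConvHull f x := le_antisymm (by rw [hgx]; exact hfxle) (lscConvHull_le f x)
  refine ⟨u, hdom, htendu, ?_, hfx⟩
  have hreal : Filter.Tendsto r Filter.atTop (𝓝 rgx) := by
    apply tendsto_order.2
    constructor
    · intro a ha
      have ha' : (a : EReal) < f x := by
        rw [hfx, hgx]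
        exact_mod_cast ha
      have hev := htendu.eventually (hlsc _ ha')
      filter_upwards [hev] with n hn
      rw [hfeq n, hru n, gt_iff_lt, EReal.coe_lt_coe_iff] at hn
      exact hn
    · intro b hb
      have hev := hRHS.eventually_lt_const hb
      filter_upwards [hev] with n hn
      exact lt_of_le_of_lt (hrub n) hn
  have hcoe : Filter.Tendsto (fun n => ((r n : ℝ) : EReal)) Filter.atTop (𝓝 ((rgx : ℝ) : EReal)) :=
    EReal.tendsto_coe.mpr hreal
  rw [hfx, hgx]
  exact hcoe.congr fun n => ((hfeq n).trans (hru n)).symm
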